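/- Let u be inner, P_u the projection onto K_u, and D_u = (I − P_u) M_z restricted to K_u^⊥ (the dual of the compressed shift). Then for every f ∈ K_u^⊥, D_u f = z f − conj(φ_f(0))·k_0^u, where φ_f = conj(z)·conj(P^− f), P^− is the projection onto conj(H^2_0), and k_0^u = 1 − conj(u(0))·u is the reproducing kernel of K_u at 0. -/

import Mathlib

open MeasureTheory Complex AddCircle

noncomputable section

namespace Paper

/-- The period `2π`. -/
abbrev T : ℝ := 2 * Real.pi

instance : Fact (0 < T) := ⟨by positivity⟩

/-- Normalized Lebesgue (Haar) measure on the circle. -/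
abbrev μ : Measure (AddCircle T) := haarAddCircle

/-- The space `L²(𝕋, dm)`. -/
abbrev L2 : Type := Lp ℂ 2 μ

lemma memLp_mul {u : AddCircle T → ℂ} (hm : AEStronglyMeasurable u μ)
    (hb : ∀ᵐ x ∂μ, ‖u x‖ ≤ 1) (f : L2) :
    MemLp (fun x => u x * (f : AddCircle T → ℂ) x) 2 μ := by
  refine (Lp.memLp f).of_le (hm.mul (Lp.aestronglyMeasurable f)) ?_
  filter_upwards [hb] with x hx
  calc ‖u x * (f : AddCircle T → ℂ) x‖ = ‖u x‖ * ‖(f : AddCircle T → ℂ) x‖ := norm_mul _ _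
    _ ≤ 1 * ‖(f : AddCircle T → ℂ) x‖ := by gcongr
    _ = ‖(f : AddCircle T → ℂ) x‖ := one_mul _

/-- Multiplication by a measurable function bounded by `1`, as a bounded operator on `L²`. -/
def mulCLM (u : AddCircle T → ℂ) (hm : AEStronglyMeasurable u μ)
    (hb : ∀ᵐ x ∂μ, ‖u x‖ ≤ 1) : L2 →L[ℂ] L2 :=
  LinearMap.mkContinuous
    { toFun := fun f => (memLp_mul hm hb f).toLp _
      map_add' := fun f g => by
        show MemLp.toLp _ (memLp_mul hm hb (f + g)) = _
        have h : (fun x => u x * ((f + g : L2) : AddCircle T → ℂ) x)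
            =ᵐ[μ] (fun x => u x * (f : AddCircle T → ℂ) x)
              + (fun x => u x * (g : AddCircle T → ℂ) x) := by
          filter_upwards [Lp.coeFn_add f g] with x hx
          simp only [Pi.add_apply, hx, mul_add]
        rw [MemLp.toLp_congr (memLp_mul hm hb (f + g))
          ((memLp_mul hm hb f).add (memLp_mul hm hb g)) h, MemLp.toLp_add]
      map_smul' := fun c f => by
        have h : (fun x => u x * ((c • f : L2) : AddCircle T → ℂ) x)
            =ᵐ[μ] c • (fun x => u x * (f : AddCircle T → ℂ) x) := by
          filter_upwards [Lp.coeFn_smul c f] with x hx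
          simp only [Pi.smul_apply, hx, smul_eq_mul]
          ring
        simp only [RingHom.id_apply]
        rw [MemLp.toLp_congr (memLp_mul hm hb (c • f))
          ((memLp_mul hm hb f).const_smul c) h, MemLp.toLp_const_smul] }
    1
    (fun f => by
      simp only [LinearMap.coe_mk, AddHom.coe_mk, one_mul]
      rw [Lp.norm_toLp]
      have h1 : eLpNorm (fun x => u x * (f : AddCircle T → ℂ) x) 2 μ
          ≤ eLpNorm (f : AddCircle T → ℂ) 2 μ := by
        refine eLpNorm_mono_ae ?_
        filter_upwards [hb] with x hx
        calc ‖u x * (f : AddCircle T → ℂ) x‖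
            = ‖u x‖ * ‖(f : AddCircle T → ℂ) x‖ := norm_mul _ _
          _ ≤ 1 * ‖(f : AddCircle T → ℂ) x‖ := by gcongr
          _ = ‖(f : AddCircle T → ℂ) x‖ := one_mul _
      calc (eLpNorm (fun x => u x * (f : AddCircle T → ℂ) x) 2 μ).toReal
          ≤ (eLpNorm (f : AddCircle T → ℂ) 2 μ).toReal :=
            ENNReal.toReal_mono (Lp.eLpNorm_ne_top f) h1
        _ = ‖f‖ := (Lp.norm_def f).symm)

lemma memLp_conj (f : L2) :
    MemLp (fun x => (starRingEnd ℂ) ((f : AddCircle T → ℂ) x)) 2 μ := by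
  refine (Lp.memLp f).of_le ?_ ?_
  · exact Complex.continuous_conj.comp_aestronglyMeasurable (Lp.aestronglyMeasurable f)
  · filter_upwards with x
    simp

/-- Complex conjugation on `L²`. -/
def conjL2 (f : L2) : L2 := (memLp_conj f).toLp _

/-- The independent variable `z = e^{iθ}` as a function on the circle. -/
def zfun : AddCircle T → ℂ := fun x => fourier 1 x

lemma zfun_meas : AEStronglyMeasurable zfun μ :=
  ((map_continuous (fourier (T := T) 1)).aestronglyMeasurable)

lemma zfun_norm : ∀ᵐ x ∂μ, ‖zfun x‖ ≤ 1 := by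
  filter_upwards with x
  simp [zfun, Circle.norm_coe]

/-- Multiplication by `z` (the bilateral shift `M` on `L²`). -/
def Mz : L2 →L[ℂ] L2 := mulCLM zfun zfun_meas zfun_norm

/-- Multiplication by `conj z`. -/
def Mzbar : L2 →L[ℂ] L2 :=
  mulCLM (fun x => (starRingEnd ℂ) (zfun x))
    (Complex.continuous_conj.comp_aestronglyMeasurable zfun_meas)
    (by filter_upwards with x; simp [zfun, Circle.norm_coe])

/-- The Hardy space `H² = {f ∈ L² : f̂(n) = 0 for all n < 0}`. -/
def H2 : Submodule ℂ L2 where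
  carrier := {f | ∀ n : ℤ, n < 0 → fourierBasis.repr f n = 0}
  add_mem' := by
    intro f g hf hg n hn
    simp [map_add, hf n hn, hg n hn]
  zero_mem' := by intro n hn; simp
  smul_mem' := by
    intro c f hf n hn
    simp [_root_.map_smul, hf n hn]

lemma continuous_coeff (n : ℤ) :
    Continuous fun f : L2 => fourierBasis.repr f n := by
  rw [Metric.continuous_iff]
  intro f ε hε
  refine ⟨ε, hε, fun g hg => ?_⟩
  have h1 : fourierBasis.repr g n - fourierBasis.repr f n = fourierBasis.repr (g - f) n := by
    simp [map_sub]
  have h2 : ‖fourierBasis.repr (g - f) n‖ ≤ ‖fourierBasis.repr (g - f)‖ :=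
    lp.norm_apply_le_norm (by norm_num) _ n
  have h3 : ‖fourierBasis.repr (g - f)‖ = ‖g - f‖ :=
    fourierBasis.repr.norm_map _
  calc dist (fourierBasis.repr g n) (fourierBasis.repr f n)
      = ‖fourierBasis.repr (g - f) n‖ := by rw [dist_eq_norm, h1]
    _ ≤ ‖g - f‖ := by rw [← h3]; exact h2
    _ = dist g f := (dist_eq_norm g f).symm
    _ < ε := hg

lemma H2_isClosed : IsClosed (H2 : Set L2) := by
  have : (H2 : Set L2) =
      ⋂ n ∈ {m : ℤ | m < 0}, {f : L2 | fourierBasis.repr f n = 0} := by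
    ext f
    simp only [Set.mem_iInter, Set.mem_setOf_eq]
    rfl
  rw [this]
  exact isClosed_biInter fun n _ => isClosed_eq (continuous_coeff n) continuous_const

instance : CompleteSpace H2 := H2_isClosed.completeSpace_coe

/-- The Riesz projection `P⁺` of `L²` onto `H²`. -/
def Pp : L2 →L[ℂ] L2 := H2.subtypeL ∘L Submodule.orthogonalProjectionOnto H2

/-- The projection `P⁻ = I − P⁺` of `L²` onto `conj(H²₀)`. -/
def Pm : L2 →L[ℂ] L2 := ContinuousLinearMap.id ℂ L2 - Pp

/-- `conj(H²₀) = {f ∈ L² : f̂(n) = 0 for all n ≥ 0}`, the orthogonal complement of `H²`. -/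
def Hm : Submodule ℂ L2 where
  carrier := {f | ∀ n : ℤ, 0 ≤ n → fourierBasis.repr f n = 0}
  add_mem' := by
    intro f g hf hg n hn
    simp [map_add, hf n hn, hg n hn]
  zero_mem' := by intro n hn; simp
  smul_mem' := by
    intro c f hf n hn
    simp [_root_.map_smul, hf n hn]

/-- The constant function `1` as an element of `L²`. -/
def oneL2 : L2 := (memLp_const (1 : ℂ)).toLp _

/-- An inner function: a bounded measurable unimodular function on the circle whose
negative Fourier coefficients vanish. -/
structure InnerData where
  u : AddCircle T → ℂ
  meas : AEStronglyMeasurable u μ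
  unim : ∀ᵐ x ∂μ, ‖u x‖ = 1
  anal : ∀ n : ℤ, n < 0 → fourierCoeff u n = 0

namespace InnerData

variable (U : InnerData)

lemma bd : ∀ᵐ x ∂μ, ‖U.u x‖ ≤ 1 := by
  filter_upwards [U.unim] with x hx
  rw [hx]

/-- Multiplication by `u`: the operator `M_u` on `L²`. -/
def M : L2 →L[ℂ] L2 := mulCLM U.u U.meas U.bd

/-- Multiplication by `conj u`: the operator `M_{conj u}` on `L²`. -/
def Mc : L2 →L[ℂ] L2 :=
  mulCLM (fun x => (starRingEnd ℂ) (U.u x))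
    (Complex.continuous_conj.comp_aestronglyMeasurable U.meas)
    (by filter_upwards [U.bd] with x hx; simpa using hx)

/-- `u` as an element of `L²`. -/
def toL2 : L2 :=
  (memLp_top_of_bound U.meas 1 U.bd |>.mono_exponent le_top).toLp _

/-- The value `u(0)` of (the analytic extension of) `u` at the origin, i.e. the mean of `u`. -/
def a0 : ℂ := fourierCoeff U.u 0

/-- The subspace `uH²`. -/
def uH2 : Submodule ℂ L2 := Submodule.map (U.M : L2 →ₗ[ℂ] L2) H2

/-- The model space `K_u = H² ∩ (uH²)ᗮ`. -/
def Ku : Submodule ℂ L2 := H2 ⊓ (U.uH2)ᗮ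

lemma Ku_isClosed : IsClosed (U.Ku : Set L2) := by
  have : (U.Ku : Set L2) = (H2 : Set L2) ∩ ((U.uH2)ᗮ : Set L2) := rfl
  rw [this]
  exact H2_isClosed.inter (U.uH2).isClosed_orthogonal

instance : CompleteSpace U.Ku := U.Ku_isClosed.completeSpace_coe

/-- `K_u^⊥`, the orthogonal complement of the model space in `L²`. -/
def KP : Submodule ℂ L2 := (U.Ku)ᗮ

instance : CompleteSpace U.KP := (U.Ku).isClosed_orthogonal.completeSpace_coe

/-- The orthogonal projection `P_u : L² → K_u` (viewed as an operator on `L²`). -/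
def Pu : L2 →L[ℂ] L2 := (U.Ku).subtypeL ∘L Submodule.orthogonalProjectionOnto U.Ku

/-- The dual of the compressed shift: `D_u = (I − P_u) M_z |_{K_u^⊥}`. -/
def Du : U.KP →L[ℂ] U.KP :=
  Submodule.orthogonalProjectionOnto U.KP ∘L Mz ∘L (U.KP).subtypeL

/-- The conjugation `C_u f = u · conj(z f)` on `L²`. -/
def C (f : L2) : L2 := U.M (conjL2 (Mz f))

/-- The reproducing kernel of `K_u` at `0`: `k₀ᵘ = 1 − conj(u(0))·u`. -/
def k0 : L2 := oneL2 - (starRingEnd ℂ) U.a0 • U.toL2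

/-- The similarity `V_u = P⁻ + (conj u/conj u(0)) P⁺` of the paper. -/
def V : L2 →L[ℂ] L2 := Pm + ((starRingEnd ℂ) U.a0)⁻¹ • (U.Mc ∘L Pp)

/-- The inverse similarity `V_u⁻¹ = P⁻ + conj(u(0)) u P⁺`. -/
def Vinv : L2 →L[ℂ] L2 := Pm + (starRingEnd ℂ) U.a0 • (U.M ∘L Pp)

end InnerData

lemma Mz_mem_H2 {f : L2} (hf : f ∈ H2) : Mz f ∈ H2 := by
  intro n hn
  rw [fourierBasis_repr]
  have hcoe : (Mz f : AddCircle T → ℂ) =ᵐ[μ] fun x => zfun x * (f : AddCircle T → ℂ) x :=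
    MemLp.coeFn_toLp (memLp_mul zfun_meas zfun_norm f)
  have h1 : fourierCoeff (Mz f : AddCircle T → ℂ) n
      = fourierCoeff (f : AddCircle T → ℂ) (n - 1) := by
    unfold fourierCoeff
    rw [integral_congr_ae (by filter_upwards [hcoe] with x hx; rw [hx])]
    refine integral_congr_ae ?_
    filter_upwards with x
    have : fourier (-n) x * zfun x = fourier (-(n - 1)) x := by
      unfold zfun
      rw [show (-(n - 1) : ℤ) = -n + 1 by ring, fourier_add]
    simp only [smul_eq_mul]
    calc fourier (-n) x * (zfun x * (f : AddCircle T → ℂ) x)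
        = (fourier (-n) x * zfun x) * (f : AddCircle T → ℂ) x := by ring
      _ = fourier (-(n - 1)) x * (f : AddCircle T → ℂ) x := by rw [this]
  rw [h1]
  have := hf (n - 1) (by omega)
  rwa [fourierBasis_repr] at this

/-- The unilateral shift `S` on `H²`. -/
def Shift : H2 →L[ℂ] H2 :=
  (Mz ∘L H2.subtypeL).codRestrict H2 (fun x => Mz_mem_H2 x.2)



section Aux

local notation "⟪" x ", " y "⟫" => @inner ℂ _ _ x y

lemma fourierCoeff_congr {f g : AddCircle T → ℂ} (h : f =ᵐ[μ] g) (n : ℤ) :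
    fourierCoeff f n = fourierCoeff g n := by
  unfold fourierCoeff
  refine integral_congr_ae ?_
  filter_upwards [h] with x hx
  rw [hx]

lemma mulCLM_coeFn (u : AddCircle T → ℂ) (hm : AEStronglyMeasurable u μ)
    (hb : ∀ᵐ x ∂μ, ‖u x‖ ≤ 1) (f : L2) :
    (mulCLM u hm hb f : AddCircle T → ℂ) =ᵐ[μ] fun x => u x * (f : AddCircle T → ℂ) x :=
  MemLp.coeFn_toLp (memLp_mul hm hb f)

lemma Mz_coeFn (f : L2) :
    (Mz f : AddCircle T → ℂ) =ᵐ[μ] fun x => zfun x * (f : AddCircle T → ℂ) x :=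
  mulCLM_coeFn _ _ _ f

lemma conjL2_coeFn (f : L2) :
    (conjL2 f : AddCircle T → ℂ) =ᵐ[μ] fun x => (starRingEnd ℂ) ((f : AddCircle T → ℂ) x) :=
  MemLp.coeFn_toLp _

lemma repr_Mz (f : L2) (n : ℤ) :
    fourierBasis.repr (Mz f) n = fourierBasis.repr f (n - 1) := by
  rw [fourierBasis_repr, fourierBasis_repr]
  rw [fourierCoeff_congr (Mz_coeFn f) n]
  unfold fourierCoeff
  refine integral_congr_ae ?_
  filter_upwards with x
  have h : fourier (-n) x * zfun x = fourier (-(n - 1)) x := by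
    unfold zfun
    rw [show (-(n - 1) : ℤ) = -n + 1 by ring, fourier_add]
  simp only [smul_eq_mul]
  calc fourier (-n) x * (zfun x * (f : AddCircle T → ℂ) x)
      = (fourier (-n) x * zfun x) * (f : AddCircle T → ℂ) x := by ring
    _ = fourier (-(n - 1)) x * (f : AddCircle T → ℂ) x := by rw [h]

lemma repr_conjL2 (f : L2) (n : ℤ) :
    fourierBasis.repr (conjL2 f) n = (starRingEnd ℂ) (fourierBasis.repr f (-n)) := by
  rw [fourierBasis_repr, fourierBasis_repr]
  rw [fourierCoeff_congr (conjL2_coeFn f) n]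
  unfold fourierCoeff
  rw [← integral_conj]
  refine integral_congr_ae ?_
  filter_upwards with x
  simp only [smul_eq_mul, map_mul]
  rw [← fourier_neg, neg_neg]

lemma inner_L2_tsum (x y : L2) :
    ⟪x, y⟫ = ∑' n : ℤ, (starRingEnd ℂ) (fourierBasis.repr x n) * fourierBasis.repr y n := by
  rw [← fourierBasis.tsum_inner_mul_inner x y]
  congr 1
  ext n
  rw [← fourierBasis.repr_apply_apply, ← inner_conj_symm x (fourierBasis n),
    ← fourierBasis.repr_apply_apply]

lemma inner_L2_zero {x y : L2}
    (h : ∀ n : ℤ, fourierBasis.repr x n = 0 ∨ fourierBasis.repr y n = 0) :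
    ⟪x, y⟫ = 0 := by
  rw [inner_L2_tsum]
  have h0 : ∀ n : ℤ, (starRingEnd ℂ) (fourierBasis.repr x n) * fourierBasis.repr y n = 0 := by
    intro n
    rcases h n with h' | h' <;> simp [h']
  simp only [h0, tsum_zero]

lemma inner_L2_single {x y : L2}
    (h : ∀ n : ℤ, n ≠ 0 → fourierBasis.repr x n = 0 ∨ fourierBasis.repr y n = 0) :
    ⟪x, y⟫ = (starRingEnd ℂ) (fourierBasis.repr x 0) * fourierBasis.repr y 0 := by
  rw [inner_L2_tsum]
  refine tsum_eq_single 0 ?_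
  intro n hn
  rcases h n hn with h' | h' <;> simp [h']

end Aux

section Aux2

local notation "⟪" x ", " y "⟫" => @inner ℂ _ _ x y

lemma M_coeFn (U : InnerData) (f : L2) :
    (U.M f : AddCircle T → ℂ) =ᵐ[μ] fun x => U.u x * (f : AddCircle T → ℂ) x :=
  mulCLM_coeFn _ _ _ f

lemma Mc_coeFn (U : InnerData) (f : L2) :
    (U.Mc f : AddCircle T → ℂ)
      =ᵐ[μ] fun x => (starRingEnd ℂ) (U.u x) * (f : AddCircle T → ℂ) x :=
  mulCLM_coeFn _ _ _ f

lemma inner_M (U : InnerData) (x y : L2) : ⟪x, U.M y⟫ = ⟪U.Mc x, y⟫ := by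
  rw [MeasureTheory.L2.inner_def, MeasureTheory.L2.inner_def]
  refine integral_congr_ae ?_
  filter_upwards [M_coeFn U y, Mc_coeFn U x] with t h1 h2
  rw [RCLike.inner_apply, RCLike.inner_apply, h1, h2]
  simp only [map_mul, RingHomCompTriple.comp_apply, RingHom.id_apply, Complex.conj_conj]
  ring

lemma fourierBasis_coeFn (n : ℤ) :
    ((fourierBasis n : L2) : AddCircle T → ℂ) =ᵐ[μ] fourier n := by
  rw [coe_fourierBasis]
  exact coeFn_fourierLp 2 n

lemma repr_Mc_fourierBasis (U : InnerData) (n m : ℤ) :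
    fourierBasis.repr (U.Mc (fourierBasis n)) m
      = (starRingEnd ℂ) (fourierCoeff U.u (n - m)) := by
  have h : (U.Mc (fourierBasis n) : AddCircle T → ℂ)
      =ᵐ[μ] fun x => (starRingEnd ℂ) (U.u x) * fourier n x := by
    filter_upwards [Mc_coeFn U (fourierBasis n), fourierBasis_coeFn n] with x hx h2x
    rw [hx, h2x]
  rw [fourierBasis_repr, fourierCoeff_congr h m]
  unfold fourierCoeff
  rw [← integral_conj]
  refine integral_congr_ae (Filter.Eventually.of_forall fun x => ?_)
  simp only [smul_eq_mul, map_mul]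
  have h1 : (starRingEnd ℂ) (fourier (-(n - m)) x) = fourier (n - m) x := by
    rw [fourier_neg, Complex.conj_conj]
  rw [h1, show n - m = n + -m from by ring, fourier_add]
  ring

lemma repr_M (U : InnerData) (h : L2) (n : ℤ) :
    fourierBasis.repr (U.M h) n
      = ∑' m : ℤ, fourierCoeff U.u (n - m) * fourierBasis.repr h m := by
  rw [fourierBasis.repr_apply_apply, inner_M, inner_L2_tsum]
  congr 1
  ext m
  rw [repr_Mc_fourierBasis, Complex.conj_conj]

lemma M_mem_H2 (U : InnerData) {h : L2} (hh : h ∈ H2) : U.M h ∈ H2 := by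
  intro n hn
  rw [repr_M]
  have h0 : ∀ m : ℤ, fourierCoeff U.u (n - m) * fourierBasis.repr h m = 0 := by
    intro m
    rcases lt_or_ge m 0 with hm | hm
    · rw [hh m hm, mul_zero]
    · rw [U.anal (n - m) (by omega), zero_mul]
  simp only [h0, tsum_zero]

lemma repr_M_zero (U : InnerData) {h : L2} (hh : h ∈ H2) :
    fourierBasis.repr (U.M h) 0 = U.a0 * fourierBasis.repr h 0 := by
  rw [repr_M]
  have := tsum_eq_single (L := SummationFilter.unconditional ℤ) (f := fun m : ℤ =>
      fourierCoeff U.u (0 - m) * fourierBasis.repr h m) 0 ?_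
  · rw [this]
    norm_num [InnerData.a0]
  · intro m hm
    rcases lt_or_ge m 0 with hm' | hm'
    · simp [hh m hm']
    · have h0 : fourierCoeff U.u (0 - m) = 0 := U.anal _ (by omega)
      simp only [h0, zero_mul]

lemma uH2_le_H2 (U : InnerData) : U.uH2 ≤ H2 := by
  rintro _ ⟨h, hh, rfl⟩
  exact M_mem_H2 U hh

lemma fourierBasis_mem_H2 {n : ℤ} (hn : 0 ≤ n) : (fourierBasis n : L2) ∈ H2 := by
  intro m hm
  rw [fourierBasis.repr_self, lp.single_apply_ne 2 n _ (by omega)]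

lemma repr_orthH2 {w : L2} (hw : w ∈ (H2 : Submodule ℂ L2)ᗮ) {n : ℤ} (hn : 0 ≤ n) :
    fourierBasis.repr w n = 0 := by
  rw [fourierBasis.repr_apply_apply]
  exact (Submodule.mem_orthogonal _ _).1 hw _ (fourierBasis_mem_H2 hn)

lemma Pp_apply (f : L2) : Pp f = (Submodule.orthogonalProjectionOnto H2 f : L2) := rfl

lemma Pm_apply (f : L2) : Pm f = f - Pp f := rfl

lemma Pp_mem (f : L2) : Pp f ∈ H2 := (Submodule.orthogonalProjectionOnto H2 f).2

lemma Pm_mem (f : L2) : Pm f ∈ (H2 : Submodule ℂ L2)ᗮ := by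
  rw [Pm_apply, Pp_apply]
  exact Submodule.sub_starProjection_mem_orthogonal f

lemma repr_Pm_of_neg (f : L2) {n : ℤ} (hn : n < 0) :
    fourierBasis.repr (Pm f) n = fourierBasis.repr f n := by
  rw [Pm_apply, map_sub]
  have : fourierBasis.repr (Pp f) n = 0 := Pp_mem f n hn
  simp [this]

lemma repr_Pm_of_nonneg (f : L2) {n : ℤ} (hn : 0 ≤ n) :
    fourierBasis.repr (Pm f) n = 0 :=
  repr_orthH2 (Pm_mem f) hn

lemma oneL2_coeFn : (oneL2 : AddCircle T → ℂ) =ᵐ[μ] fun _ => 1 :=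
  MemLp.coeFn_toLp _

lemma oneL2_eq_fourierBasis : oneL2 = (fourierBasis 0 : L2) := by
  refine Lp.ext ?_
  filter_upwards [oneL2_coeFn, fourierBasis_coeFn 0] with x hx hy
  rw [hx, hy, fourier_zero]

lemma oneL2_mem_H2 : oneL2 ∈ H2 := by
  rw [oneL2_eq_fourierBasis]
  exact fourierBasis_mem_H2 le_rfl

lemma repr_oneL2 (n : ℤ) : fourierBasis.repr oneL2 n = if n = 0 then 1 else 0 := by
  rw [oneL2_eq_fourierBasis, fourierBasis.repr_self]
  by_cases h : n = 0
  · subst h; rw [lp.single_apply_self]; simp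
  · rw [lp.single_apply_ne 2 0 _ h]; simp [h]

lemma toL2_coeFn (U : InnerData) : (U.toL2 : AddCircle T → ℂ) =ᵐ[μ] U.u :=
  MemLp.coeFn_toLp _

lemma repr_toL2 (U : InnerData) (n : ℤ) :
    fourierBasis.repr U.toL2 n = fourierCoeff U.u n := by
  rw [fourierBasis_repr]
  exact fourierCoeff_congr (toL2_coeFn U) n

lemma toL2_eq_M_one (U : InnerData) : U.toL2 = U.M oneL2 := by
  refine Lp.ext ?_
  have h := M_coeFn U oneL2
  filter_upwards [toL2_coeFn U, M_coeFn U oneL2, oneL2_coeFn] with x h1 h2 h3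
  rw [h1, h2, h3, mul_one]

lemma toL2_mem_uH2 (U : InnerData) : U.toL2 ∈ U.uH2 := by
  rw [toL2_eq_M_one]
  exact ⟨oneL2, oneL2_mem_H2, rfl⟩

lemma Mz_M_comm (U : InnerData) (f : L2) : Mz (U.M f) = U.M (Mz f) := by
  refine Lp.ext ?_
  filter_upwards [Mz_coeFn (U.M f), M_coeFn U f, M_coeFn U (Mz f), Mz_coeFn f]
    with x h1 h2 h3 h4
  rw [h1, h2, h3, h4]
  ring

lemma inner_toL2 (U : InnerData) {h : L2} :
    ⟪U.M h, U.toL2⟫ = (starRingEnd ℂ) (fourierBasis.repr h 0) := by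
  rw [MeasureTheory.L2.inner_def]
  have key : ∫ x, ⟪(U.M h : AddCircle T → ℂ) x, (U.toL2 : AddCircle T → ℂ) x⟫ ∂μ
      = ∫ x, (starRingEnd ℂ) ((h : AddCircle T → ℂ) x) ∂μ := by
    refine integral_congr_ae ?_
    filter_upwards [M_coeFn U h, toL2_coeFn U, U.unim] with x h1 h2 h3
    rw [RCLike.inner_apply, h1, h2]
    have : (starRingEnd ℂ) (U.u x) * U.u x = 1 := by
      rw [mul_comm, Complex.mul_conj]
      norm_cast
      rw [Complex.normSq_eq_norm_sq, h3]
      norm_num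
    calc U.u x * (starRingEnd ℂ) (U.u x * (h : AddCircle T → ℂ) x)
        = ((starRingEnd ℂ) (U.u x) * U.u x) * (starRingEnd ℂ) ((h : AddCircle T → ℂ) x) := by
          simp only [map_mul]; ring
      _ = (starRingEnd ℂ) ((h : AddCircle T → ℂ) x) := by rw [this, one_mul]
  rw [key, integral_conj, fourierBasis_repr]
  congr 1
  unfold fourierCoeff
  refine integral_congr_ae (Filter.Eventually.of_forall fun x => ?_)
  simp

lemma k0_mem_Ku (U : InnerData) : U.k0 ∈ U.Ku := by
  refine Submodule.mem_inf.mpr ⟨?_, ?_⟩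
  · intro n hn
    unfold InnerData.k0
    have hne : n ≠ 0 := by omega
    have h1 : fourierBasis.repr oneL2 n = 0 := by rw [repr_oneL2]; simp [hne]
    have h2 : fourierBasis.repr U.toL2 n = 0 := by rw [repr_toL2]; exact U.anal n hn
    rw [map_sub, _root_.map_smul]
    show fourierBasis.repr oneL2 n - (starRingEnd ℂ) U.a0 * fourierBasis.repr U.toL2 n = 0
    simp [h1, h2]
  · rw [Submodule.mem_orthogonal]
    rintro _ ⟨h, hh, rfl⟩
    show ⟪U.M h, U.k0⟫ = 0
    unfold InnerData.k0
    rw [inner_sub_right, inner_smul_right, inner_toL2]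
    have h1 : ⟪U.M h, oneL2⟫
        = (starRingEnd ℂ) (U.a0 * fourierBasis.repr h 0) := by
      rw [inner_L2_single (fun n hn => Or.inr (by rw [repr_oneL2]; simp [hn]))]
      rw [repr_oneL2, repr_M_zero U hh]
      simp
    rw [h1, map_mul]
    ring

lemma inner_Ku_uH2 {U : InnerData} {g : L2} (hg : g ∈ U.Ku) {v : L2} (hv : v ∈ U.uH2) :
    ⟪g, v⟫ = 0 :=
  inner_eq_zero_symm.mp ((Submodule.mem_orthogonal _ _).1 hg.2 v hv)

lemma inner_Mz_closure (U : InnerData) {g : L2} (hg : g ∈ U.Ku) {x : L2}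
    (hx : x ∈ U.uH2.topologicalClosure) : ⟪g, Mz x⟫ = 0 := by
  have hle : U.uH2 ≤ LinearMap.ker ((innerSL ℂ g).comp Mz : L2 →ₗ[ℂ] ℂ) := by
    rintro _ ⟨h, hh, rfl⟩
    rw [LinearMap.mem_ker]
    show ⟪g, Mz (U.M h)⟫ = 0
    rw [Mz_M_comm]
    exact inner_Ku_uH2 hg ⟨Mz h, Mz_mem_H2 hh, rfl⟩
  have hle2 : U.uH2.topologicalClosure ≤ LinearMap.ker ((innerSL ℂ g).comp Mz : L2 →ₗ[ℂ] ℂ) :=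
    Submodule.topologicalClosure_minimal _ hle (ContinuousLinearMap.isClosed_ker _)
  have hx' := hle2 hx
  simpa using hx'

lemma Pp_add_Pm (f : L2) : Pp f + Pm f = f := by
  rw [Pm_apply]; abel

lemma Pp_mem_closure (U : InnerData) (f : U.KP) :
    Pp (f : L2) ∈ U.uH2.topologicalClosure := by
  rw [← Submodule.orthogonal_orthogonal_eq_closure, Submodule.mem_orthogonal]
  intro w hw
  have hPpw : Pp w ∈ U.Ku := by
    refine Submodule.mem_inf.mpr ⟨Pp_mem w, ?_⟩
    · rw [Submodule.mem_orthogonal]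
      intro v hv
      have h1 : ⟪v, w⟫ = 0 := (Submodule.mem_orthogonal _ _).1 hw v hv
      have h2 : ⟪v, Pm w⟫ = 0 :=
        (Submodule.mem_orthogonal _ _).1 (Pm_mem w) v (uH2_le_H2 U hv)
      have := congrArg (fun y => ⟪v, y⟫) (Pp_add_Pm w)
      simp only [inner_add_right] at this
      rw [h1, h2] at this
      simpa using this
  have h3 : ⟪Pp w, (f : L2)⟫ = 0 := f.2 _ hPpw
  have h4 : ⟪Pp w, Pm (f : L2)⟫ = 0 :=
    (Submodule.mem_orthogonal _ _).1 (Pm_mem _) _ (Pp_mem w)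
  have h5 : ⟪Pm w, Pp (f : L2)⟫ = 0 :=
    (Submodule.mem_orthogonal' _ _).1 (Pm_mem w) _ (Pp_mem _)
  have hsplit : ⟪w, Pp (f : L2)⟫ = ⟪Pp w, Pp (f : L2)⟫ + ⟪Pm w, Pp (f : L2)⟫ := by
    conv_lhs => rw [← Pp_add_Pm w]
    rw [inner_add_left]
  have hsplit2 : ⟪Pp w, (f : L2)⟫
      = ⟪Pp w, Pp (f : L2)⟫ + ⟪Pp w, Pm (f : L2)⟫ := by
    conv_lhs => rw [← Pp_add_Pm (f : L2)]
    rw [inner_add_right]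
  rw [hsplit, h5, add_zero]
  rw [h3, h4, add_zero] at hsplit2
  exact hsplit2.symm

end Aux2

local notation "⟪" x ", " y "⟫" => @inner ℂ _ _ x y

/-- `D_u f = z f − conj(φ_f(0))·k₀ᵘ` for `f ∈ K_u^⊥`, where
`φ_f = conj(z)·conj(P⁻ f)` and `φ_f(0)` is its mean (zeroth Fourier coefficient). -/
theorem Du_formula (U : InnerData) (f : U.KP) :
    (U.Du f : L2) = Mz (f : L2)
      - (starRingEnd ℂ)
          (fourierCoeff ((conjL2 (Mz (Pm (f : L2)))) : AddCircle T → ℂ) 0) • U.k0 := by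
  have hc : (starRingEnd ℂ)
      (fourierCoeff ((conjL2 (Mz (Pm (f : L2)))) : AddCircle T → ℂ) 0)
      = fourierBasis.repr (f : L2) (-1) := by
    rw [← fourierBasis_repr, repr_conjL2, Complex.conj_conj, neg_zero, repr_Mz,
      zero_sub, repr_Pm_of_neg _ (by norm_num : (-1 : ℤ) < 0)]
  rw [hc]
  set c := fourierBasis.repr (f : L2) (-1) with hcdef
  have hDu : (U.Du f : L2) = (Submodule.orthogonalProjectionOnto U.KP (Mz (f : L2)) : L2) := rfl
  have hval : (Submodule.orthogonalProjectionOnto (U.Ku)ᗮ (Mz (f : L2)) : L2)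
      = Mz (f : L2) - (Submodule.orthogonalProjectionOnto U.Ku (Mz (f : L2)) : L2) :=
    Submodule.starProjection_orthogonal_val _
  rw [hDu]
  show (Submodule.orthogonalProjectionOnto (U.Ku)ᗮ (Mz (f : L2)) : L2) = _
  rw [hval]
  congr 1
  refine Submodule.eq_starProjection_of_mem_orthogonal (K := U.Ku)
    (Submodule.smul_mem _ _ (k0_mem_Ku U)) ?_
  rw [Submodule.mem_orthogonal]
  intro g hg
  rw [inner_sub_right, inner_smul_right, sub_eq_zero]
  have hk0 : ⟪g, U.k0⟫ = (starRingEnd ℂ) (fourierBasis.repr g 0) := by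
    unfold InnerData.k0
    rw [inner_sub_right, inner_smul_right]
    have h1 : ⟪g, U.toL2⟫ = 0 := inner_Ku_uH2 hg (toL2_mem_uH2 U)
    have h2 : ⟪g, oneL2⟫ = (starRingEnd ℂ) (fourierBasis.repr g 0) := by
      rw [inner_L2_single (fun n hn => Or.inr (by rw [repr_oneL2]; simp [hn]))]
      rw [repr_oneL2]
      simp
    rw [h1, h2]
    ring
  have hsplit : Mz (f : L2) = Mz (Pm (f : L2)) + Mz (Pp (f : L2)) := by
    rw [← map_add]
    congr 1
    rw [add_comm]
    exact (Pp_add_Pm _).symm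
  have hzero : ⟪g, Mz (Pp (f : L2))⟫ = 0 :=
    inner_Mz_closure U hg (Pp_mem_closure U f)
  have hKu := Submodule.mem_inf.mp hg
  have hmain : ⟪g, Mz (Pm (f : L2))⟫ = (starRingEnd ℂ) (fourierBasis.repr g 0) * c := by
    have hside : ∀ n : ℤ, n ≠ 0 → fourierBasis.repr g n = 0 ∨
        fourierBasis.repr (Mz (Pm (f : L2))) n = 0 := by
      intro n hn
      rcases lt_or_ge n 0 with h' | h'
      · exact Or.inl (hKu.1 n h')
      · refine Or.inr ?_
        rw [repr_Mz]
        exact repr_Pm_of_nonneg _ (by omega)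
    rw [inner_L2_single hside, repr_Mz, zero_sub,
      repr_Pm_of_neg _ (by norm_num : (-1 : ℤ) < 0)]
  rw [hsplit, inner_add_right, hzero, add_zero, hmain, hk0]
  ring

end Paper
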